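/- Let G be a transitive permutation group of degree n with minimal degree 3. Then there exist m ≥ 3 and k with n = mk such that, up to permutation isomorphism, Alt(m)^k ≤ G ≤ Sym(m) ≀ Sym(k) acting on [m] × [k], where Alt(m)^k is contained in the base group Sym(m)^k of the wreath product. -/

import Mathlib

open Equiv Pointwise

/-- The minimal degree of a permutation group: the least number of points moved
by a non-identity element. -/
noncomputable def minDeg {Ω : Type*} [Fintype Ω] [DecidableEq Ω]
    (G : Subgroup (Equiv.Perm Ω)) : ℕ :=
  sInf {n | ∃ g ∈ G, g ≠ 1 ∧ (Equiv.Perm.support g).card = n}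

/-- A permutation group is transitive. -/
def IsTransitivePermGroup {Ω : Type*} (G : Subgroup (Equiv.Perm Ω)) : Prop :=
  ∀ a b : Ω, ∃ g ∈ G, g a = b

/-- The element of the imprimitive wreath product determined by a function
`g : ι → Perm Δ` and a permutation `h` of the index set, acting on `Δ × ι` by
`(δ, i) ↦ (g i δ, h i)`. -/
def wreathPerm {Δ ι : Type*} (g : ι → Equiv.Perm Δ) (h : Equiv.Perm ι) :
    Equiv.Perm (Δ × ι) where
  toFun x := (g x.2 x.1, h x.2)
  invFun x := ((g (h⁻¹ x.2))⁻¹ x.1, h⁻¹ x.2)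
  left_inv := by rintro ⟨d, i⟩; simp
  right_inv := by rintro ⟨d, i⟩; simp

/-- The imprimitive wreath product `Y ≀ H` of permutation groups, as a permutation
group on `Δ × ι`.  (The defining set is already a subgroup, so taking the
subgroup closure does not change it.) -/
def wreathProduct {Δ ι : Type*} (Y : Subgroup (Equiv.Perm Δ))
    (H : Subgroup (Equiv.Perm ι)) : Subgroup (Equiv.Perm (Δ × ι)) :=
  Subgroup.closure {σ | ∃ (g : ι → Equiv.Perm Δ) (h : Equiv.Perm ι),
    (∀ i, g i ∈ Y) ∧ h ∈ H ∧ σ = wreathPerm g h}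

/-- The copy `X^ι` of a power of `X` inside the base group of a wreath product,
as a permutation group on `Δ × ι`. -/
def basePower {Δ ι : Type*} (X : Subgroup (Equiv.Perm Δ)) :
    Subgroup (Equiv.Perm (Δ × ι)) :=
  Subgroup.closure {σ | ∃ g : ι → Equiv.Perm Δ, (∀ i, g i ∈ X) ∧ σ = wreathPerm g 1}

/-- Transport of permutations along a bijection, as a group isomorphism. -/
def permMapEquiv {α β : Type*} (f : α ≃ β) : Equiv.Perm α ≃* Equiv.Perm β where
  toFun g := (f.symm.trans g).trans f
  invFun g := (f.trans g).trans f.symm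
  left_inv g := by ext x; simp
  right_inv g := by ext x; simp
  map_mul' g₁ g₂ := by ext x; simp [Equiv.Perm.mul_apply]

/-- Transport of a permutation group along a bijection of the underlying sets.
`mapPermGroup f G` is the permutation group on `β` corresponding to `G` under the
relabelling `f`; thus `G` and `mapPermGroup f G` are permutation isomorphic. -/
def mapPermGroup {α β : Type*} (f : α ≃ β) (G : Subgroup (Equiv.Perm α)) :
    Subgroup (Equiv.Perm β) :=
  Subgroup.map (permMapEquiv f).toMonoidHom G

open Equiv Equiv.Perm

section C3
variable {Ω : Type*} [DecidableEq Ω]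

/-- The explicit 3-cycle `(x y z)`. -/
def c3 (x y z : Ω) : Equiv.Perm Ω := Equiv.swap x z * Equiv.swap x y

variable {x y z w : Ω}

lemma c3_apply_left (hxy : x ≠ y) (hyz : y ≠ z) : c3 x y z x = y := by
  simp only [c3, Equiv.Perm.mul_apply, Equiv.swap_apply_left,
    Equiv.swap_apply_of_ne_of_ne hxy.symm hyz]

lemma c3_apply_mid : c3 x y z y = z := by
  simp [c3]

lemma c3_apply_right (hxz : x ≠ z) (hyz : y ≠ z) : c3 x y z z = x := by
  simp only [c3, Equiv.Perm.mul_apply,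
    Equiv.swap_apply_of_ne_of_ne hxz.symm hyz.symm, Equiv.swap_apply_right]

lemma c3_apply_other (hwx : w ≠ x) (hwy : w ≠ y) (hwz : w ≠ z) : c3 x y z w = w := by
  simp only [c3, Equiv.Perm.mul_apply, Equiv.swap_apply_of_ne_of_ne hwx hwy,
    Equiv.swap_apply_of_ne_of_ne hwx hwz]

/-- Characterisation of `c3` by its values. -/
lemma c3_char {π : Equiv.Perm Ω} (hxy : x ≠ y) (hxz : x ≠ z) (hyz : y ≠ z)
    (h1 : π x = y) (h2 : π y = z) (h3 : π z = x)
    (h0 : ∀ w, w ≠ x → w ≠ y → w ≠ z → π w = w) : π = c3 x y z := by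
  ext w
  by_cases hwx : w = x
  · subst hwx; rw [h1, c3_apply_left hxy hyz]
  by_cases hwy : w = y
  · subst hwy; rw [h2, c3_apply_mid]
  by_cases hwz : w = z
  · subst hwz; rw [h3, c3_apply_right hxz hyz]
  rw [h0 w hwx hwy hwz, c3_apply_other hwx hwy hwz]

lemma c3_rot (hxy : x ≠ y) (hxz : x ≠ z) (hyz : y ≠ z) : c3 x y z = c3 y z x :=
  c3_char hyz hxy.symm hxz.symm c3_apply_mid (c3_apply_right hxz hyz)
    (c3_apply_left hxy hyz) (fun w h1 h2 h3 => c3_apply_other h3 h1 h2)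

lemma c3_inv (hxy : x ≠ y) (hxz : x ≠ z) (hyz : y ≠ z) : (c3 x y z)⁻¹ = c3 x z y := by
  refine c3_char hxz hxy hyz.symm ?_ ?_ ?_ ?_
  · rw [Equiv.Perm.inv_eq_iff_eq, c3_apply_right hxz hyz]
  · rw [Equiv.Perm.inv_eq_iff_eq, c3_apply_mid]
  · rw [Equiv.Perm.inv_eq_iff_eq, c3_apply_left hxy hyz]
  · intro w h1 h2 h3
    rw [Equiv.Perm.inv_eq_iff_eq, c3_apply_other h1 h3 h2]

lemma c3_conj (σ : Equiv.Perm Ω) (hxy : x ≠ y) (hxz : x ≠ z) (hyz : y ≠ z) :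
    σ * c3 x y z * σ⁻¹ = c3 (σ x) (σ y) (σ z) := by
  refine c3_char (fun h => hxy (σ.injective h)) (fun h => hxz (σ.injective h))
    (fun h => hyz (σ.injective h)) ?_ ?_ ?_ ?_
  · simp [Equiv.Perm.mul_apply, c3_apply_left hxy hyz]
  · simp [Equiv.Perm.mul_apply, c3_apply_mid]
  · simp [Equiv.Perm.mul_apply, c3_apply_right hxz hyz]
  · intro w h1 h2 h3
    have : σ⁻¹ w ≠ x := fun h => h1 (by rw [← h]; simp)
    have h2' : σ⁻¹ w ≠ y := fun h => h2 (by rw [← h]; simp)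
    have h3' : σ⁻¹ w ≠ z := fun h => h3 (by rw [← h]; simp)
    rw [Equiv.Perm.mul_apply, Equiv.Perm.mul_apply, c3_apply_other this h2' h3']; simp

lemma c3_isThreeCycle [Fintype Ω] (hxy : x ≠ y) (hxz : x ≠ z) (hyz : y ≠ z) :
    (c3 x y z).IsThreeCycle :=
  Equiv.Perm.isThreeCycle_swap_mul_swap_same hxz hxy hyz.symm

/-- Any three-cycle is of the form `c3 x y z`. -/
lemma eq_c3_of_support (g : Equiv.Perm Ω) (hxy : x ≠ y) (hxz : x ≠ z) (hyz : y ≠ z)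
    [Fintype Ω] (hs : g.support = {x, y, z}) (hgx : g x = y) : g = c3 x y z := by
  have hxs : x ∈ g.support := by rw [hs]; simp
  have hys : y ∈ g.support := by rw [hs]; simp
  have hzs : z ∈ g.support := by rw [hs]; simp
  have hgy : g y = z := by
    have h1 : g y ∈ g.support := Equiv.Perm.apply_mem_support.2 hys
    have h2 : g y ≠ y := Equiv.Perm.mem_support.1 hys
    have h3 : g y ≠ x := by
      intro h
      have h4 : g z ∈ g.support := Equiv.Perm.apply_mem_support.2 hzs
      have h5 : g z ≠ z := Equiv.Perm.mem_support.1 hzs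
      have h6 : g z ≠ y := fun hh => hxz (g.injective (hgx.trans hh.symm))
      have h7 : g z ≠ x := fun hh => hyz (g.injective (h.trans hh.symm))
      rw [hs] at h4; simp at h4; tauto
    rw [hs] at h1; simp at h1; tauto
  have hgz : g z = x := by
    have h1 : g z ∈ g.support := Equiv.Perm.apply_mem_support.2 hzs
    have h5 : g z ≠ z := Equiv.Perm.mem_support.1 hzs
    have h6 : g z ≠ y := fun hh => hxz (g.injective (hgx.trans hh.symm))
    rw [hs] at h1; simp at h1; tauto
  refine c3_char hxy hxz hyz hgx hgy hgz ?_
  intro w h1 h2 h3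
  have : w ∉ g.support := by rw [hs]; simp [h1, h2, h3]
  exact Equiv.Perm.notMem_support.1 this

lemma isThreeCycle_parts [Fintype Ω] {g : Equiv.Perm Ω} (h : g.IsThreeCycle) :
    ∃ x y z : Ω, x ≠ y ∧ x ≠ z ∧ y ≠ z ∧ g = c3 x y z := by
  obtain ⟨x, y, z, hxy, hxz, hyz, hs⟩ := Finset.card_eq_three.1 h.card_support
  have hxs : x ∈ g.support := by rw [hs]; simp
  have hgx : g x ∈ g.support := Equiv.Perm.apply_mem_support.2 hxs
  have hgxx : g x ≠ x := Equiv.Perm.mem_support.1 hxs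
  rw [hs] at hgx; simp at hgx
  rcases hgx with h1 | h1 | h1
  · exact absurd h1 hgxx
  · exact ⟨x, y, z, hxy, hxz, hyz, eq_c3_of_support g hxy hxz hyz hs h1⟩
  · refine ⟨x, z, y, hxz, hxy, hyz.symm, eq_c3_of_support g hxz hxy hyz.symm ?_ h1⟩
    rw [hs]; ext w; simp; tauto

end C3
section Rel
variable {Ω : Type*} [DecidableEq Ω] (G : Subgroup (Equiv.Perm Ω))

/-- The block relation: related iff equal or joint members of a 3-cycle of `G`. -/
def relG (a b : Ω) : Prop := a = b ∨ ∃ t, t ≠ a ∧ t ≠ b ∧ a ≠ b ∧ c3 a b t ∈ G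

variable {G}

lemma c3_conj_mem {σ : Equiv.Perm Ω} {x y z : Ω} (hσ : σ ∈ G) (h : c3 x y z ∈ G)
    (hxy : x ≠ y) (hxz : x ≠ z) (hyz : y ≠ z) : c3 (σ x) (σ y) (σ z) ∈ G := by
  rw [← c3_conj σ hxy hxz hyz]
  exact mul_mem (mul_mem hσ h) (inv_mem hσ)

lemma c3_rot_mem {x y z : Ω} (h : c3 x y z ∈ G)
    (hxy : x ≠ y) (hxz : x ≠ z) (hyz : y ≠ z) : c3 y z x ∈ G := by
  rwa [c3_rot hxy hxz hyz] at h

lemma c3_inv_mem {x y z : Ω} (h : c3 x y z ∈ G)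
    (hxy : x ≠ y) (hxz : x ≠ z) (hyz : y ≠ z) : c3 x z y ∈ G := by
  rw [← c3_inv hxy hxz hyz]; exact inv_mem h

/-- Key step: two 3-cycles of `G` sharing two points. -/
lemma c3_step {a b c t : Ω} (hab : a ≠ b) (hac : a ≠ c) (hbc : b ≠ c)
    (hta : t ≠ a) (htb : t ≠ b) (htc : t ≠ c)
    (h1 : c3 a b t ∈ G) (h2 : c3 a c t ∈ G) : c3 a b c ∈ G := by
  -- conjugating (a c t) by (a b t) gives (b c a)
  have h3 := c3_conj_mem h1 h2 hac hta.symm htc.symm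
  rw [c3_apply_left hab htb.symm, c3_apply_other hac.symm hbc.symm (Ne.symm htc),
    c3_apply_right hta.symm htb.symm] at h3
  -- h3 : c3 b c a ∈ G
  exact c3_rot_mem (c3_rot_mem h3 hbc hab.symm hac.symm) hac.symm hbc.symm hab

/-- Main combinatorial lemma: from 3-cycles `(a b t)` and `(a c s)` in `G`,
the 3-cycle `(a b c)` is in `G`. -/
lemma c3_main {a b c t s : Ω} (hab : a ≠ b) (hac : a ≠ c) (hbc : b ≠ c)
    (hta : t ≠ a) (htb : t ≠ b) (hsa : s ≠ a) (hsc : s ≠ c)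
    (h1 : c3 a b t ∈ G) (h2 : c3 a c s ∈ G) : c3 a b c ∈ G := by
  by_cases htc : t = c
  · subst htc; exact h1
  by_cases hsb : s = b
  · subst hsb; exact c3_inv_mem h2 hac hab hbc.symm
  by_cases hst : s = t
  · subst hst; exact c3_step hab hac hbc hsa hsb htc h1 h2
  -- now a,b,c,t,s are pairwise distinct
  -- conjugate (a c s) by (a b t): get (b c s)
  have g1 := c3_conj_mem h1 h2 hac hsa.symm hsc.symm
  rw [c3_apply_left hab htb.symm, c3_apply_other hac.symm hbc.symm (Ne.symm htc),
    c3_apply_other hsa hsb hst] at g1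
  -- g1 : c3 b c s ∈ G; conjugate (a b t) by (b c s): get (a c t)
  have g2 := c3_conj_mem g1 h1 hab hta.symm htb.symm
  rw [c3_apply_other hab hac hsa.symm, c3_apply_left hbc hsc.symm,
    c3_apply_other htb htc (fun h => hst h.symm)] at g2
  -- g2 : c3 a c t ∈ G
  exact c3_step hab hac hbc hta htb htc h1 g2

lemma relG_refl (a : Ω) : relG G a a := Or.inl rfl

lemma relG_symm {a b : Ω} (h : relG G a b) : relG G b a := by
  rcases h with rfl | ⟨t, hta, htb, hab, h⟩
  · exact Or.inl rfl
  · -- (a b t) ∈ G, rotate twice: (b t a), (t a b); want (b a t'): use inverse of rotation: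
    -- (a b t)⁻¹ = (a t b), rotated = (b a t)?  (a t b) rot: (t b a) rot: (b a t) ✓
    have h1 := c3_inv_mem h hab hta.symm htb.symm
    -- h1 : c3 a t b ∈ G
    have h2 := c3_rot_mem (c3_rot_mem h1 hta.symm hab htb) htb hta hab.symm
    exact Or.inr ⟨t, htb, hta, hab.symm, h2⟩

/-- Main lemma: if `b` and `c` are both related to `a` then `(a b c) ∈ G`. -/
lemma relG_main {a b c : Ω} (hab : relG G a b) (hac : relG G a c)
    (hab' : a ≠ b) (hac' : a ≠ c) (hbc' : b ≠ c) : c3 a b c ∈ G := by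
  rcases hab with rfl | ⟨t, hta, htb, -, h1⟩
  · exact absurd rfl hab'
  rcases hac with rfl | ⟨s, hsa, hsc, -, h2⟩
  · exact absurd rfl hac'
  exact c3_main hab' hac' hbc' hta htb hsa hsc h1 h2

lemma relG_trans {a b c : Ω} (h1 : relG G a b) (h2 : relG G b c) : relG G a c := by
  rcases eq_or_ne a b with rfl | hab
  · exact h2
  rcases eq_or_ne b c with rfl | hbc
  · exact h1
  rcases eq_or_ne a c with rfl | hac
  · exact relG_refl a
  -- use main anchored at b
  have h := relG_main (relG_symm h1) h2 hab.symm hbc hac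
  -- h : c3 b a c ∈ G; rotate: (a c b) ∈ G
  have h' := c3_rot_mem h hab.symm hbc hac
  exact Or.inr ⟨b, hab.symm, hbc, hac, h'⟩

lemma relG_conj {σ : Equiv.Perm Ω} (hσ : σ ∈ G) {a b : Ω} (h : relG G a b) :
    relG G (σ a) (σ b) := by
  rcases h with rfl | ⟨t, hta, htb, hab, h⟩
  · exact Or.inl rfl
  · refine Or.inr ⟨σ t, fun hh => hta (σ.injective hh), fun hh => htb (σ.injective hh),
      fun hh => hab (σ.injective hh), ?_⟩
    exact c3_conj_mem hσ h hab hta.symm htb.symm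

lemma relG_conj_iff {σ : Equiv.Perm Ω} (hσ : σ ∈ G) {a b : Ω} :
    relG G (σ a) (σ b) ↔ relG G a b := by
  refine ⟨fun h => ?_, relG_conj hσ⟩
  have := relG_conj (inv_mem hσ) h
  simpa using this

end Rel
section Wreath
variable {Δ ι : Type*}

lemma wreathPerm_apply (g : ι → Equiv.Perm Δ) (h : Equiv.Perm ι) (p : Δ × ι) :
    wreathPerm g h p = (g p.2 p.1, h p.2) := rfl

/-- `g ↦ wreathPerm g 1` as a monoid hom. -/
def baseHom : (ι → Equiv.Perm Δ) →* Equiv.Perm (Δ × ι) where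
  toFun g := wreathPerm g 1
  map_one' := by ext p <;> simp [wreathPerm_apply]
  map_mul' g g' := by ext p <;> simp [wreathPerm_apply]

lemma baseHom_mulSingle_c3 [DecidableEq Δ] [DecidableEq ι] (i : ι) {x y z : Δ}
    (hxy : x ≠ y) (hxz : x ≠ z) (hyz : y ≠ z) :
    baseHom (Pi.mulSingle i (c3 x y z)) = c3 (x, i) (y, i) (z, i) := by
  refine c3_char (by simp [Prod.ext_iff, hxy]) (by simp [Prod.ext_iff, hxz])
    (by simp [Prod.ext_iff, hyz]) ?_ ?_ ?_ ?_
  · show ((Pi.mulSingle i (c3 x y z) : ι → Equiv.Perm Δ) i x, (1 : Equiv.Perm ι) i) = (y, i)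
    simp [c3_apply_left hxy hyz]
  · show ((Pi.mulSingle i (c3 x y z) : ι → Equiv.Perm Δ) i y, (1 : Equiv.Perm ι) i) = (z, i)
    simp [c3_apply_mid]
  · show ((Pi.mulSingle i (c3 x y z) : ι → Equiv.Perm Δ) i z, (1 : Equiv.Perm ι) i) = (x, i)
    simp [c3_apply_right hxz hyz]
  · rintro ⟨d, j⟩ h1 h2 h3
    show ((Pi.mulSingle i (c3 x y z) : ι → Equiv.Perm Δ) j d, (1 : Equiv.Perm ι) j) = (d, j)
    rcases eq_or_ne j i with rfl | hj
    · have hdx : d ≠ x := fun h => h1 (by rw [h])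
      have hdy : d ≠ y := fun h => h2 (by rw [h])
      have hdz : d ≠ z := fun h => h3 (by rw [h])
      simp [c3_apply_other hdx hdy hdz]
    · simp [Pi.mulSingle_eq_of_ne hj]

/-- Any fiber-preserving permutation lies in the full wreath product. -/
lemma mem_wreathProduct_of_fiber [Nonempty Δ] (σ : Equiv.Perm (Δ × ι))
    (hfib : ∀ p q : Δ × ι, p.2 = q.2 → (σ p).2 = (σ q).2)
    (hfib' : ∀ p q : Δ × ι, p.2 = q.2 → (σ⁻¹ p).2 = (σ⁻¹ q).2) :
    σ ∈ wreathProduct (⊤ : Subgroup (Equiv.Perm Δ)) (⊤ : Subgroup (Equiv.Perm ι)) := by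
  obtain ⟨x0⟩ := ‹Nonempty Δ›
  have key : ∀ i, ∀ d : Δ, (σ (d, i)).2 = (σ (x0, i)).2 := fun i d => hfib _ _ rfl
  have key' : ∀ i, ∀ d : Δ, (σ⁻¹ (d, i)).2 = (σ⁻¹ (x0, i)).2 := fun i d => hfib' _ _ rfl
  have hleft : ∀ i, (σ⁻¹ (x0, (σ (x0, i)).2)).2 = i := by
    intro i
    rw [← key' _ (σ (x0, i)).1]
    simp
  have hright : ∀ i, (σ (x0, (σ⁻¹ (x0, i)).2)).2 = i := by
    intro i
    rw [← key _ (σ⁻¹ (x0, i)).1]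
    simp
  set h : Equiv.Perm ι :=
    ⟨fun i => (σ (x0, i)).2, fun i => (σ⁻¹ (x0, i)).2, hleft, hright⟩ with hh
  have hgl : ∀ i, Function.LeftInverse (fun d => (σ⁻¹ (d, (σ (x0, i)).2)).1)
      (fun d => (σ (d, i)).1) := by
    intro i d
    have h2 : (σ (x0, i)).2 = (σ (d, i)).2 := (key i d).symm
    show (σ⁻¹ ((σ (d, i)).1, (σ (x0, i)).2)).1 = d
    rw [h2]
    simp
  have hgr : ∀ i, Function.RightInverse (fun d => (σ⁻¹ (d, (σ (x0, i)).2)).1)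
      (fun d => (σ (d, i)).1) := by
    intro i d
    show (σ ((σ⁻¹ (d, (σ (x0, i)).2)).1, i)).1 = d
    generalize hj : (σ (x0, i)).2 = j
    have h2 : (σ⁻¹ (d, j)).2 = i := by rw [← hj, key' _ d]; exact hleft i
    rw [← h2]
    simp
  set g : ι → Equiv.Perm Δ := fun i =>
    ⟨fun d => (σ (d, i)).1, fun d => (σ⁻¹ (d, (σ (x0, i)).2)).1, hgl i, hgr i⟩ with hg
  apply Subgroup.subset_closure
  refine ⟨g, h, fun i => trivial, trivial, ?_⟩
  ext p
  · show _ = ((σ (p.1, p.2)).1, (σ (x0, p.2)).2).1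
    simp
  · show _ = ((σ (p.1, p.2)).1, (σ (x0, p.2)).2).2
    rw [← key p.2 p.1]
end Wreath

section PME
variable {α β : Type*} (f : α ≃ β)

lemma permMapEquiv_apply (g : Equiv.Perm α) (b : β) :
    permMapEquiv f g b = f (g (f.symm b)) := rfl

lemma permMapEquiv_symm_eq : (permMapEquiv f).symm = permMapEquiv f.symm := rfl

lemma permMapEquiv_c3 [DecidableEq α] [DecidableEq β] {x y z : α}
    (hxy : x ≠ y) (hxz : x ≠ z) (hyz : y ≠ z) :
    permMapEquiv f (c3 x y z) = c3 (f x) (f y) (f z) := by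
  refine c3_char (fun h => hxy (f.injective h)) (fun h => hxz (f.injective h))
    (fun h => hyz (f.injective h)) ?_ ?_ ?_ ?_
  · rw [permMapEquiv_apply, Equiv.symm_apply_apply, c3_apply_left hxy hyz]
  · rw [permMapEquiv_apply, Equiv.symm_apply_apply, c3_apply_mid]
  · rw [permMapEquiv_apply, Equiv.symm_apply_apply, c3_apply_right hxz hyz]
  · intro w h1 h2 h3
    rw [permMapEquiv_apply,
      c3_apply_other (fun h => h1 (by rw [← h, Equiv.apply_symm_apply]))
        (fun h => h2 (by rw [← h, Equiv.apply_symm_apply]))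
        (fun h => h3 (by rw [← h, Equiv.apply_symm_apply])),
      Equiv.apply_symm_apply]

lemma mem_mapPermGroup_iff (G : Subgroup (Equiv.Perm α)) (τ : Equiv.Perm β) :
    τ ∈ mapPermGroup f G ↔ permMapEquiv f.symm τ ∈ G := by
  rw [mapPermGroup, Subgroup.mem_map_equiv, permMapEquiv_symm_eq]

end PME

/-- A transitive permutation group `G` of degree `n` and minimal
degree 3 satisfies, up to permutation isomorphism,
`Alt(m)^k ≤ G ≤ Sym(m) ≀ Sym(k)` acting on `[m] × [k]` for some `m ≥ 3` with
`n = m * k`, with `Alt(m)^k` inside the base group of the wreath product. -/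
theorem statement_6 {Ω : Type} [Fintype Ω] [DecidableEq Ω] (G : Subgroup (Equiv.Perm Ω))
    (hG : IsTransitivePermGroup G) (n : ℕ) (hn : Fintype.card Ω = n)
    (h3 : minDeg G = 3) :
    ∃ (m k : ℕ) (f : Ω ≃ Fin m × Fin k), 3 ≤ m ∧ n = m * k ∧
      basePower (alternatingGroup (Fin m)) ≤ mapPermGroup f G ∧
      mapPermGroup f G ≤
        wreathProduct (⊤ : Subgroup (Equiv.Perm (Fin m))) (⊤ : Subgroup (Equiv.Perm (Fin k))) := by
    classical
  -- extract a 3-cycle from the minimal degree hypothesis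
  have hne : {n | ∃ g ∈ G, g ≠ 1 ∧ (Equiv.Perm.support g).card = n}.Nonempty := by
    by_contra h
    rw [Set.not_nonempty_iff_eq_empty] at h
    rw [minDeg, h, Nat.sInf_empty] at h3
    exact absurd h3 (by norm_num)
  have h0 : minDeg G ∈ {n | ∃ g ∈ G, g ≠ 1 ∧ (Equiv.Perm.support g).card = n} :=
    Nat.sInf_mem hne
  rw [h3] at h0
  obtain ⟨g0, hg0G, hg0ne, hg0c⟩ := h0
  have hg0 : g0.IsThreeCycle := card_support_eq_three_iff.mp hg0c
  obtain ⟨x0, y0, z0, hxy, hxz, hyz, hg0eq⟩ := isThreeCycle_parts hg0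
  rw [hg0eq] at hg0G
  -- the block equivalence relation
  letI st : Setoid Ω := ⟨relG G, ⟨relG_refl, fun h => relG_symm h, fun h1 h2 => relG_trans h1 h2⟩⟩
  let m := Fintype.card {x // relG G x0 x}
  let k := Fintype.card (Quotient st)
  have hcard : ∀ b : Ω, Fintype.card {x // relG G b x} = m := by
    intro b
    obtain ⟨σ, hσ, hσb⟩ := hG x0 b
    have hiff : ∀ x, relG G x0 x ↔ relG G b (σ x) := fun x => by
      rw [← hσb]; exact (relG_conj_iff hσ).symm
    exact (Fintype.card_congr (Equiv.subtypeEquiv σ hiff)).symm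
  have hfib : ∀ q : Quotient st, Fintype.card {x // Quotient.mk st x = q} = m := by
    intro q
    induction q using Quotient.inductionOn with
    | h b =>
      rw [← hcard b]
      apply Fintype.card_congr
      refine Equiv.subtypeEquiv (Equiv.refl Ω) fun x => ?_
      simp only [Equiv.refl_apply]
      constructor
      · intro h; exact relG_symm (Quotient.exact h)
      · intro h; exact Quotient.sound (relG_symm h)
  let e2 : ∀ q : Quotient st, {x // Quotient.mk st x = q} ≃ Fin m := fun q =>
    Fintype.equivFinOfCardEq (hfib q)
  let e4 : Quotient st ≃ Fin k := Fintype.equivFin _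
  let f : Ω ≃ Fin m × Fin k :=
    (((Equiv.sigmaFiberEquiv (fun x : Ω => Quotient.mk st x)).symm.trans
      (Equiv.sigmaCongrRight e2)).trans
      (Equiv.sigmaEquivProd (Quotient st) (Fin m))).trans
      ((Equiv.prodCongr e4 (Equiv.refl (Fin m))).trans (Equiv.prodComm (Fin k) (Fin m)))
  have hf2 : ∀ x : Ω, (f x).2 = e4 (Quotient.mk st x) := fun x => rfl
  have hfs : ∀ p : Fin m × Fin k, Quotient.mk st (f.symm p) = e4.symm p.2 := by
    intro p
    apply e4.injective
    rw [← hf2 (f.symm p), Equiv.apply_symm_apply, Equiv.apply_symm_apply]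
  have hrel : ∀ p q : Fin m × Fin k, p.2 = q.2 → relG G (f.symm p) (f.symm q) := by
    intro p q h
    have h2 : Quotient.mk st (f.symm p) = Quotient.mk st (f.symm q) := by
      rw [hfs p, hfs q, h]
    exact Quotient.exact h2
  -- m ≥ 3
  have hx0y0 : relG G x0 y0 := Or.inr ⟨z0, Ne.symm hxz, Ne.symm hyz, hxy, hg0G⟩
  have hx0z0 : relG G x0 z0 := Or.inr ⟨y0, Ne.symm hxy, hyz, hxz,
    c3_inv_mem hg0G hxy hxz hyz⟩
  have h3m : 3 ≤ m := by
    have hinj : Function.Injective (fun i : Fin 3 =>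
        (![⟨x0, relG_refl x0⟩, ⟨y0, hx0y0⟩, ⟨z0, hx0z0⟩] i : {x // relG G x0 x})) := by
      intro i j hij
      fin_cases i <;> fin_cases j <;> simp_all [Subtype.ext_iff]
    simpa using Fintype.card_le_of_injective _ hinj
  have hnmk : n = m * k := by
    rw [← hn, Fintype.card_congr f, Fintype.card_prod, Fintype.card_fin, Fintype.card_fin]
  -- lower bound
  have hlow : basePower (alternatingGroup (Fin m)) ≤ mapPermGroup f G := by
    rw [basePower, Subgroup.closure_le]
    rintro σ ⟨g, hg, rfl⟩
    rw [SetLike.mem_coe]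
    have hb : wreathPerm g (1 : Equiv.Perm (Fin k)) = baseHom g := rfl
    erw [hb, ← Finset.noncommProd_mulSingle g, Finset.map_noncommProd]
    apply Subgroup.noncommProd_mem
    intro i _
    have hgi := hg i
    rw [← Equiv.Perm.closure_three_cycles_eq_alternating] at hgi
    let ψ : Equiv.Perm (Fin m) →* Equiv.Perm (Fin m × Fin k) :=
      baseHom.comp (MonoidHom.mulSingle (fun _ : Fin k => Equiv.Perm (Fin m)) i)
    have hsub : {σ : Equiv.Perm (Fin m) | σ.IsThreeCycle} ⊆
        ↑((mapPermGroup f G).comap ψ) := by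
      intro σ hσ
      obtain ⟨x, y, z, hxy', hxz', hyz', rfl⟩ := isThreeCycle_parts hσ
      rw [SetLike.mem_coe, Subgroup.mem_comap]
      have hψ : ψ (c3 x y z) = c3 (x, i) (y, i) (z, i) :=
        baseHom_mulSingle_c3 i hxy' hxz' hyz'
      rw [hψ, mem_mapPermGroup_iff]
      have hne1 : ((x, i) : Fin m × Fin k) ≠ (y, i) := by simp [Prod.ext_iff, hxy']
      have hne2 : ((x, i) : Fin m × Fin k) ≠ (z, i) := by simp [Prod.ext_iff, hxz']
      have hne3 : ((y, i) : Fin m × Fin k) ≠ (z, i) := by simp [Prod.ext_iff, hyz']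
      rw [permMapEquiv_c3 f.symm hne1 hne2 hne3]
      exact relG_main (hrel _ _ rfl) (hrel _ _ rfl)
        (fun h => hne1 (f.symm.injective h)) (fun h => hne2 (f.symm.injective h))
        (fun h => hne3 (f.symm.injective h))
    have := (Subgroup.closure_le _).mpr hsub hgi
    rw [Subgroup.mem_comap] at this
    exact this
  -- upper bound
  have hup : mapPermGroup f G ≤
      wreathProduct (⊤ : Subgroup (Equiv.Perm (Fin m))) (⊤ : Subgroup (Equiv.Perm (Fin k))) := by
    intro τ hτ
    rw [mem_mapPermGroup_iff] at hτ
    haveI : Nonempty (Fin m) := ⟨⟨0, by omega⟩⟩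
    have key : ∀ (τ' : Equiv.Perm (Fin m × Fin k)), permMapEquiv f.symm τ' ∈ G →
        ∀ p q : Fin m × Fin k, p.2 = q.2 → (τ' p).2 = (τ' q).2 := by
      intro τ' hτ' p q h
      have hk : ∀ p : Fin m × Fin k, τ' p = f ((permMapEquiv f.symm τ') (f.symm p)) := by
        intro p
        conv_lhs => rw [← MulEquiv.apply_symm_apply (permMapEquiv f) τ']
        rfl
      rw [hk p, hk q, hf2, hf2]
      congr 1
      apply Quotient.sound
      exact relG_conj hτ' (hrel p q h)
    refine mem_wreathProduct_of_fiber τ (key τ hτ) (key τ⁻¹ ?_)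
    rw [map_inv]
    exact inv_mem hτ
  exact ⟨m, k, f, h3m, hnmk, hlow, hup⟩
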